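/- arXiv:2106.12972 — 2 statements merged into one kernel-verified Lean document; each statement's English description precedes it below -/
import Mathlib

section
/- For every k ≥ 1 and every z ∈ Z, the iterated commutator [z, x, (2^k−1)…, x] lies in the subgroup L_k·Q_k (a subgroup of Γ since L_k is normal). (Lemma 3.3(i) of the paper.) -/
namespace Paper

variable {G : Type*} [Group G]

/-- The paper's commutator `[a,b] = a⁻¹ b⁻¹ a b`. -/
def pc {G : Type*} [Group G] (a b : G) : G := a⁻¹ * b⁻¹ * a * b

/-- The left-normed iterated commutator `[a, x, (r)…, x]`. -/
def itc {G : Type*} [Group G] (x a : G) : ℕ → G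
  | 0 => a
  | r + 1 => pc (itc x a r) x

/-- `c_i`, where `c_1 = y` and `c_{i+1} = [c_i, x]`; equivalently `c_i = [y, x, (i-1)…, x]`. -/
def cc (x y : G) (i : ℕ) : G := itc x y (i - 1)

/-- `z_{m,n} = [c_m, c_n]`. -/
def zz (x y : G) (m n : ℕ) : G := pc (cc x y m) (cc x y n)

/-- `H = ⟨c_i : i ≥ 1⟩`. -/
def Hsub (x y : G) : Subgroup G :=
  Subgroup.closure {g | ∃ i, 1 ≤ i ∧ g = cc x y i}

/-- `Z = ⟨c_l², z_{m,n} : l, m, n ≥ 1⟩`. -/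
def Zsub (x y : G) : Subgroup G :=
  Subgroup.closure ({g | ∃ l, 1 ≤ l ∧ g = cc x y l ^ 2} ∪
    {g | ∃ m n, 1 ≤ m ∧ 1 ≤ n ∧ g = zz x y m n})

/-- `w_{i,j,k} = ∏_{t=1}^{2^k−1} [z_{i+t,j+t−1}, x, (2^k−1−t)…, x]`,
factors in order of increasing `t` (reindexed by `t ↦ t+1`). -/
def ww (x y : G) (i j k : ℕ) : G :=
  ((List.range (2 ^ k - 1)).map
    (fun t => itc x (zz x y (i + t + 1) (j + t)) (2 ^ k - 2 - t))).prod

/-- `L_k`, the normal closure of `{w_{i,j,k} : i,j ≥ 1} ∪ {z_{m,n} : m ≥ 2^k, n ≥ 1}`. -/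
def Lsub (x y : G) (k : ℕ) : Subgroup G :=
  Subgroup.normalClosure ({g | ∃ i j, 1 ≤ i ∧ 1 ≤ j ∧ g = ww x y i j k} ∪
    {g | ∃ m n, 2 ^ k ≤ m ∧ 1 ≤ n ∧ g = zz x y m n})

/-- `Q_k = ⟨c_l² : l ≥ 2^{k−1}⟩`. -/
def Qsub (x y : G) (k : ℕ) : Subgroup G :=
  Subgroup.closure {g | ∃ l, 2 ^ (k - 1) ≤ l ∧ g = cc x y l ^ 2}

/-- `d_k(h) = [h,x,(2^k−1)…,x]⁻¹ · x^{−2^k} · (xh)^{2^k}`. -/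
def dd (x y : G) (k : ℕ) (h : G) : G :=
  (itc x h (2 ^ k - 1))⁻¹ * (x ^ 2 ^ k)⁻¹ * (x * h) ^ 2 ^ k

/-- `Γ^{2^k} = ⟨g^{2^k} : g ∈ Γ⟩`. -/
def pow2Sub (G : Type*) [Group G] (k : ℕ) : Subgroup G :=
  Subgroup.closure {g | ∃ a : G, g = a ^ 2 ^ k}

/-- `ζ(h₁,h₂) = ∏_{ℓ=0}^{2^k−2} [h₁^x, x, (ℓ)…, x, h₂, x, (2^k−2−ℓ)…, x]`,
factors in order of increasing `ℓ`. -/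
def zeta (x : G) (k : ℕ) (h₁ h₂ : G) : G :=
  ((List.range (2 ^ k - 1)).map
    (fun l => itc x (pc (itc x (x⁻¹ * h₁ * x) l) h₂) (2 ^ k - 2 - l))).prod

-- basic identities
lemma itc_succ (x a : G) (r : ℕ) : itc x a (r+1) = pc (itc x a r) x := rfl

lemma pc_one_left (b : G) : pc (1:G) b = 1 := by unfold pc; group

lemma pc_self (a : G) : pc a a = 1 := by unfold pc; group

lemma pc_inv_eq (a b : G) : (pc a b)⁻¹ = pc b a := by unfold pc; group

lemma zz_inv (x y : G) (m n : ℕ) : (zz x y m n)⁻¹ = zz x y n m := pc_inv_eq _ _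

lemma cc_succ (x y : G) (l : ℕ) (hl : 1 ≤ l) :
    cc x y (l+1) = pc (cc x y l) x := by
  obtain ⟨m, rfl⟩ := Nat.exists_eq_add_of_le hl
  show itc x y (1 + m + 1 - 1) = pc (itc x y (1 + m - 1)) x
  have h1 : 1 + m + 1 - 1 = (1 + m - 1) + 1 := by omega
  rw [h1, itc_succ]

lemma conj_cc (x y : G) (l : ℕ) (hl : 1 ≤ l) :
    x⁻¹ * cc x y l * x = cc x y l * cc x y (l+1) := by
  rw [cc_succ x y l hl]; unfold pc; group

lemma cc_mem_H (x y : G) (l : ℕ) (hl : 1 ≤ l) : cc x y l ∈ Hsub x y :=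
  Subgroup.subset_closure ⟨l, hl, rfl⟩

lemma csq_mem_Z (x y : G) (l : ℕ) (hl : 1 ≤ l) : cc x y l ^ 2 ∈ Zsub x y :=
  Subgroup.subset_closure (Or.inl ⟨l, hl, rfl⟩)

lemma zz_mem_Z (x y : G) (m n : ℕ) (hm : 1 ≤ m) (hn : 1 ≤ n) :
    zz x y m n ∈ Zsub x y :=
  Subgroup.subset_closure (Or.inr ⟨m, n, hm, hn, rfl⟩)

lemma Z_le_H (x y : G) : Zsub x y ≤ Hsub x y := by
  rw [Zsub, Subgroup.closure_le]
  rintro g (⟨l, hl, rfl⟩ | ⟨m, n, hm, hn, rfl⟩)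
  · exact pow_mem (cc_mem_H x y l hl) 2
  · exact mul_mem (mul_mem (mul_mem (inv_mem (cc_mem_H x y m hm))
      (inv_mem (cc_mem_H x y n hn))) (cc_mem_H x y m hm)) (cc_mem_H x y n hn)

lemma pc_mul_left (a b c : G) (h : pc a c * b = b * pc a c) :
    pc (a * b) c = pc a c * pc b c := by
  have hc : Commute (pc a c) b := h
  have e1 : pc (a * b) c = b⁻¹ * pc a c * (c⁻¹ * b * c) := by unfold pc; group
  have e2 : pc a c * pc b c = pc a c * b⁻¹ * (c⁻¹ * b * c) := by unfold pc; group
  rw [e1, e2, hc.inv_right.eq]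

lemma pc_mul_right (a c d : G) (h : pc a c * d = d * pc a c) :
    pc a (c * d) = pc a d * pc a c := by
  have e1 : pc a (c * d) = pc a d * (d⁻¹ * (pc a c * d)) := by unfold pc; group
  rw [e1, h]; group

lemma conj_pc (a b g : G) : g⁻¹ * pc a b * g = pc (g⁻¹ * a * g) (g⁻¹ * b * g) := by
  unfold pc; group

lemma sq_mul (a b : G) (h : pc b a * b = b * pc b a) :
    (a * b) ^ 2 = a ^ 2 * b ^ 2 * pc b a := by
  have hba : b * a = a * b * pc b a := by unfold pc; group
  rw [pow_two, pow_two, pow_two]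
  calc a * b * (a * b) = a * (b * a) * b := by group
    _ = a * (a * b * pc b a) * b := by rw [hba]
    _ = a * a * b * (pc b a * b) := by group
    _ = a * a * b * (b * pc b a) := by rw [h]
    _ = a * a * (b * b) * pc b a := by group

lemma pc_sq_x (a x : G) (h : pc (pc a x) a * pc a x = pc a x * pc (pc a x) a) :
    pc (a ^ 2) x = (pc a x) ^ 2 * pc (pc a x) a := by
  set b := pc a x with hb
  have hconj : x⁻¹ * a * x = a * b := by rw [hb]; unfold pc; group
  have e1 : pc (a ^ 2) x = a⁻¹ * a⁻¹ * (x⁻¹ * a * x) * (x⁻¹ * a * x) := by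
    rw [pow_two]; unfold pc; group
  rw [e1, hconj, pow_two]
  calc a⁻¹ * a⁻¹ * (a * b) * (a * b) = a⁻¹ * a⁻¹ * a * (b * a) * b := by group
    _ = a⁻¹ * a⁻¹ * a * (a * b * pc b a) * b := by
        rw [show b * a = a * b * pc b a by unfold pc; group]
    _ = b * (pc b a * b) := by group
    _ = b * (b * pc b a) := by rw [h]
    _ = b * b * pc b a := by group


section withH
variable (x y : G) (hca : ∀ z ∈ Zsub x y, ∀ h ∈ Hsub x y, z * h = h * z)

include hca

lemma zcommH {z h : G} (hz : z ∈ Zsub x y) (hh : h ∈ Hsub x y) : z * h = h * z :=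
  hca z hz h hh

lemma zcomm {z w : G} (hz : z ∈ Zsub x y) (hw : w ∈ Zsub x y) : z * w = w * z :=
  hca z hz w (Z_le_H x y hw)

lemma conj_mem_Z {z : G} (hz : z ∈ Zsub x y) : x⁻¹ * z * x ∈ Zsub x y := by
  induction hz using Subgroup.closure_induction with
  | mem g hg =>
    rcases hg with ⟨l, hl, rfl⟩ | ⟨m, n, hm, hn, rfl⟩
    · -- (c_l^2)^x = c_l^2 * c_{l+1}^2 * z_{l+1,l}
      have e0 : x⁻¹ * cc x y l ^ 2 * x = (x⁻¹ * cc x y l * x) ^ 2 := by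
        rw [pow_two, pow_two]; group
      rw [e0, conj_cc x y l hl]
      rw [sq_mul _ _ (zcommH x y hca
        (zz_mem_Z x y (l+1) l (by omega) hl)
        (cc_mem_H x y (l+1) (by omega)))]
      exact mul_mem (mul_mem (csq_mem_Z x y l hl) (csq_mem_Z x y (l+1) (by omega)))
        (zz_mem_Z x y (l+1) l (by omega) hl)
    · -- z_{m,n}^x
      have e0 : x⁻¹ * zz x y m n * x
          = pc (cc x y m * cc x y (m+1)) (cc x y n * cc x y (n+1)) := by
        rw [zz, conj_pc, conj_cc x y m hm, conj_cc x y n hn]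
      set a := cc x y m; set b := cc x y (m+1); set c := cc x y n; set d := cc x y (n+1)
      have hacd : pc a (c * d) = pc a d * pc a c := pc_mul_right a c d
        (zcommH x y hca (zz_mem_Z x y m n hm hn) (cc_mem_H x y (n+1) (by omega)))
      have hbcd : pc b (c * d) = pc b d * pc b c := pc_mul_right b c d
        (zcommH x y hca (zz_mem_Z x y (m+1) n (by omega) hn) (cc_mem_H x y (n+1) (by omega)))
      have hmem : pc a (c * d) ∈ Zsub x y := by
        rw [hacd]
        exact mul_mem (zz_mem_Z x y m (n+1) hm (by omega)) (zz_mem_Z x y m n hm hn)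
      have e1 : pc (a * b) (c * d) = pc a (c * d) * pc b (c * d) := by
        apply pc_mul_left
        exact zcommH x y hca hmem (cc_mem_H x y (m+1) (by omega))
      rw [e0, e1, hacd, hbcd]
      exact mul_mem (mul_mem (zz_mem_Z x y m (n+1) hm (by omega))
          (zz_mem_Z x y m n hm hn))
        (mul_mem (zz_mem_Z x y (m+1) (n+1) (by omega) (by omega))
          (zz_mem_Z x y (m+1) n (by omega) hn))
  | one => simpa using one_mem (Zsub x y)
  | mul g h hg hh ihg ihh =>
    have e : x⁻¹ * (g * h) * x = (x⁻¹ * g * x) * (x⁻¹ * h * x) := by group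
    rw [e]; exact mul_mem ihg ihh
  | inv g hg ihg =>
    have e : x⁻¹ * g⁻¹ * x = (x⁻¹ * g * x)⁻¹ := by group
    rw [e]; exact inv_mem ihg

lemma pc_x_mem_Z {z : G} (hz : z ∈ Zsub x y) : pc z x ∈ Zsub x y := by
  have e : pc z x = z⁻¹ * (x⁻¹ * z * x) := by unfold pc; group
  rw [e]; exact mul_mem (inv_mem hz) (conj_mem_Z x y hca hz)

lemma pc_x_mul {z w : G} (hz : z ∈ Zsub x y) (hw : w ∈ Zsub x y) :
    pc (z * w) x = pc z x * pc w x := by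
  have hcomm : pc z x * w⁻¹ = w⁻¹ * pc z x :=
    zcomm x y hca (pc_x_mem_Z x y hca hz) (inv_mem hw)
  have e1 : pc (z * w) x = w⁻¹ * (pc z x * (x⁻¹ * w * x)) := by unfold pc; group
  have e2 : pc z x * pc w x = pc z x * (w⁻¹ * (x⁻¹ * w * x)) := by unfold pc; group
  rw [e1, e2, ← mul_assoc, ← hcomm, mul_assoc]

lemma itc_mem_Z {z : G} (hz : z ∈ Zsub x y) (r : ℕ) : itc x z r ∈ Zsub x y := by
  induction r with
  | zero => exact hz
  | succ r ih => exact pc_x_mem_Z x y hca ih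

lemma itc_mul {z w : G} (hz : z ∈ Zsub x y) (hw : w ∈ Zsub x y) (r : ℕ) :
    itc x (z * w) r = itc x z r * itc x w r := by
  induction r with
  | zero => rfl
  | succ r ih =>
    rw [itc_succ, ih, itc_succ, itc_succ]
    exact pc_x_mul x y hca (itc_mem_Z x y hca hz r) (itc_mem_Z x y hca hw r)

end withH

lemma itc_one (x : G) (r : ℕ) : itc x (1 : G) r = 1 := by
  induction r with
  | zero => rfl
  | succ r ih => rw [itc_succ, ih, pc_one_left]

section withH2
variable (x y : G) (hca : ∀ z ∈ Zsub x y, ∀ h ∈ Hsub x y, z * h = h * z)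
include hca

lemma itc_inv {z : G} (hz : z ∈ Zsub x y) (r : ℕ) :
    itc x z⁻¹ r = (itc x z r)⁻¹ := by
  have h1 : itc x z r * itc x z⁻¹ r = 1 := by
    rw [← itc_mul x y hca hz (inv_mem hz), mul_inv_cancel, itc_one]
  exact eq_inv_of_mul_eq_one_left (by rw [← itc_mul x y hca (inv_mem hz) hz, inv_mul_cancel, itc_one])

omit hca in
lemma prod_mem_Z {L : List G} (hL : ∀ a ∈ L, a ∈ Zsub x y) : L.prod ∈ Zsub x y :=
  list_prod_mem hL

lemma pc_x_prod {L : List G} (hL : ∀ a ∈ L, a ∈ Zsub x y) :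
    pc L.prod x = (L.map (fun a => pc a x)).prod := by
  induction L with
  | nil => simpa using pc_one_left x
  | cons a t ih =>
    rw [List.prod_cons, List.map_cons, List.prod_cons,
      pc_x_mul x y hca (hL a (by simp)) (prod_mem_Z x y (fun b hb => hL b (by simp [hb]))),
      ih (fun b hb => hL b (by simp [hb]))]

end withH2

section Key
variable (x y : G) (hca : ∀ z ∈ Zsub x y, ∀ h ∈ Hsub x y, z * h = h * z)
include hca

lemma keyA (k i j : ℕ) (hk : 1 ≤ k) (hj : 1 ≤ j) :
    itc x (zz x y (i+1) j) (2^k - 1)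
      = pc (ww x y i j k) x
        * (zz x y (i + 2^k) (j + 2^k - 1) * (ww x y (i+1) (j+1) k)⁻¹) := by
  have h2 : 2 ≤ 2^k := by
    calc 2 = 2^1 := by norm_num
    _ ≤ 2^k := Nat.pow_le_pow_right (by norm_num) hk
  set M := 2^k - 2 with hMdef
  have hM2 : 2^k - 1 = M + 1 := by omega
  set F : ℕ → G := fun s => itc x (zz x y (i+s+2) (j+s+1)) (M - s) with hF
  set P := ((List.range M).map F).prod with hP
  have memf : ∀ a ∈ (List.range (2^k-1)).map
      (fun t => itc x (zz x y (i + t + 1) (j + t)) (2 ^ k - 2 - t)), a ∈ Zsub x y := by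
    intro a ha
    rw [List.mem_map] at ha
    obtain ⟨t, _, rfl⟩ := ha
    exact itc_mem_Z x y hca (zz_mem_Z x y _ _ (by omega) (by omega)) _
  have E1 : pc (ww x y i j k) x = itc x (zz x y (i+1) j) (M+1) * P := by
    unfold ww
    rw [pc_x_prod x y hca memf, List.map_map]
    have hcong : ((List.range (2^k-1)).map
          ((fun a => pc a x) ∘ fun t => itc x (zz x y (i + t + 1) (j + t)) (2 ^ k - 2 - t)))
        = (List.range (2^k-1)).map
          (fun t => itc x (zz x y (i + t + 1) (j + t)) (2 ^ k - 1 - t)) := by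
      apply List.map_congr_left
      intro t ht
      rw [List.mem_range] at ht
      show pc (itc x (zz x y (i + t + 1) (j + t)) (2 ^ k - 2 - t)) x = _
      rw [← itc_succ]
      congr 1
      omega
    rw [hcong, hM2, List.range_succ_eq_map, List.map_cons, List.prod_cons, List.map_map]
    rw [hP]
    congr 2
    apply List.map_congr_left
    intro s hs
    show itc x (zz x y (i + (s+1) + 1) (j + (s+1))) (M + 1 - (s+1)) = F s
    rw [hF, show M + 1 - (s+1) = M - s by omega]
    rfl
  have E2 : ww x y (i+1) (j+1) k = P * zz x y (i + 2^k) (j + 2^k - 1) := by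
    unfold ww
    rw [hM2, List.range_succ, List.map_append, List.prod_append,
      List.map_singleton, List.prod_singleton]
    rw [hP]
    congr 1
    · congr 1
      apply List.map_congr_left
      intro s hs
      show itc x (zz x y (i + 1 + s + 1) (j + 1 + s)) (2^k - 2 - s) = F s
      rw [hF, show i + 1 + s + 1 = i + s + 2 by omega, show j + 1 + s = j + s + 1 by omega,
        show 2^k - 2 - s = M - s by omega]
    · show itc x (zz x y (i + 1 + M + 1) (j + 1 + M)) (2^k - 2 - M) = _
      rw [show 2^k - 2 - M = 0 by omega]
      show zz x y (i + 1 + M + 1) (j + 1 + M) = _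
      rw [show i + 1 + M + 1 = i + 2^k by omega, show j + 1 + M = j + 2^k - 1 by omega]
  have hPinv : P⁻¹ = zz x y (i + 2^k) (j + 2^k - 1) * (ww x y (i+1) (j+1) k)⁻¹ := by
    rw [E2]; group
  rw [hM2, ← hPinv, E1]
  group

lemma keyB_aux (l : ℕ) (hl : 1 ≤ l) (r : ℕ) :
    itc x (cc x y l ^ 2) r = (cc x y (l + r)) ^ 2 *
      ((List.range r).map (fun t => itc x (zz x y (l + t + 1) (l + t)) (r - 1 - t))).prod := by
  induction r with
  | zero => simp [itc]
  | succ r ih =>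
    have memP : ∀ a ∈ (List.range r).map
        (fun t => itc x (zz x y (l + t + 1) (l + t)) (r - 1 - t)), a ∈ Zsub x y := by
      intro a ha
      rw [List.mem_map] at ha
      obtain ⟨t, _, rfl⟩ := ha
      exact itc_mem_Z x y hca (zz_mem_Z x y _ _ (by omega) (by omega)) _
    have hsucc : pc (cc x y (l + r)) x = cc x y (l + r + 1) :=
      (cc_succ x y (l + r) (by omega)).symm
    have hcm : pc (pc (cc x y (l+r)) x) (cc x y (l+r)) * pc (cc x y (l+r)) x
        = pc (cc x y (l+r)) x * pc (pc (cc x y (l+r)) x) (cc x y (l+r)) := by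
      rw [hsucc]
      exact zcommH x y hca (zz_mem_Z x y (l+r+1) (l+r) (by omega) (by omega))
        (cc_mem_H x y (l+r+1) (by omega))
    have e2 : pc (cc x y (l + r) ^ 2) x
        = cc x y (l + r + 1) ^ 2 * zz x y (l + r + 1) (l + r) := by
      have := pc_sq_x (cc x y (l + r)) x hcm
      rw [hsucc] at this
      exact this
    have e3 : pc (((List.range r).map
          (fun t => itc x (zz x y (l + t + 1) (l + t)) (r - 1 - t))).prod) x
        = ((List.range r).map
          (fun t => itc x (zz x y (l + t + 1) (l + t)) (r - t))).prod := by
      rw [pc_x_prod x y hca memP, List.map_map]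
      congr 1
      apply List.map_congr_left
      intro t ht
      rw [List.mem_range] at ht
      show pc (itc x (zz x y (l + t + 1) (l + t)) (r - 1 - t)) x = _
      rw [← itc_succ, show r - 1 - t + 1 = r - t by omega]
    have e4 : itc x (cc x y l ^ 2) (r+1)
        = cc x y (l + r + 1) ^ 2 * (zz x y (l + r + 1) (l + r) *
            ((List.range r).map
              (fun t => itc x (zz x y (l + t + 1) (l + t)) (r - t))).prod) := by
      rw [itc_succ, ih,
        pc_x_mul x y hca (csq_mem_Z x y (l+r) (by omega)) (prod_mem_Z x y memP),
        e2, e3, mul_assoc]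
    rw [e4]
    have hswap : zz x y (l + r + 1) (l + r) *
          ((List.range r).map (fun t => itc x (zz x y (l + t + 1) (l + t)) (r - t))).prod
        = ((List.range r).map (fun t => itc x (zz x y (l + t + 1) (l + t)) (r - t))).prod
          * zz x y (l + r + 1) (l + r) := by
      apply zcomm x y hca (zz_mem_Z x y _ _ (by omega) (by omega))
      apply prod_mem_Z x y
      intro a ha
      rw [List.mem_map] at ha
      obtain ⟨t, _, rfl⟩ := ha
      exact itc_mem_Z x y hca (zz_mem_Z x y _ _ (by omega) (by omega)) _
    rw [hswap]
    congr 1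
    simp only [Nat.add_sub_cancel]
    rw [List.range_succ, List.map_append, List.prod_append,
      List.map_singleton, List.prod_singleton, Nat.sub_self]
    rfl

lemma keyB (k l : ℕ) (hl : 1 ≤ l) :
    itc x (cc x y l ^ 2) (2^k - 1)
      = (cc x y (l + (2^k - 1))) ^ 2 * ww x y l l k := by
  rw [keyB_aux x y hca l hl (2^k - 1)]
  congr 1

lemma zcase (k i j : ℕ) (hk : 1 ≤ k) (hi : 1 ≤ i) (hj : 1 ≤ j) :
    itc x (zz x y (i+1) j) (2^k - 1) ∈ Lsub x y k := by
  have h2 : 2 ≤ 2^k := by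
    calc 2 = 2^1 := by norm_num
    _ ≤ 2^k := Nat.pow_le_pow_right (by norm_num) hk
  rw [keyA x y hca k i j hk hj]
  have hw : ww x y i j k ∈ Lsub x y k :=
    Subgroup.subset_normalClosure (Or.inl ⟨i, j, hi, hj, rfl⟩)
  have hw' : ww x y (i+1) (j+1) k ∈ Lsub x y k :=
    Subgroup.subset_normalClosure (Or.inl ⟨i+1, j+1, by omega, by omega, rfl⟩)
  have hzend : zz x y (i + 2^k) (j + 2^k - 1) ∈ Lsub x y k :=
    Subgroup.subset_normalClosure (Or.inr ⟨i + 2^k, j + 2^k - 1, by omega, by omega, rfl⟩)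
  have hpc : pc (ww x y i j k) x ∈ Lsub x y k := by
    have e : pc (ww x y i j k) x
        = (ww x y i j k)⁻¹ * (x⁻¹ * ww x y i j k * (x⁻¹)⁻¹) := by unfold pc; group
    rw [e]
    exact mul_mem (inv_mem hw) ((Subgroup.normalClosure_normal).conj_mem _ hw x⁻¹)
  exact mul_mem hpc (mul_mem hzend (inv_mem hw'))

end Key

theorem lemma_Lk_i (x y : G)
    (hca : ∀ z ∈ Zsub x y, ∀ h ∈ Hsub x y, z * h = h * z)
    (hz2 : ∀ z ∈ Zsub x y, z ^ 2 = 1)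
    (k : ℕ) (hk : 1 ≤ k) (z : G) (hz : z ∈ Zsub x y) :
    itc x z (2 ^ k - 1) ∈ Lsub x y k ⊔ Qsub x y k := by
  have h2 : 2 ≤ 2^k := by
    calc 2 = 2^1 := by norm_num
    _ ≤ 2^k := Nat.pow_le_pow_right (by norm_num) hk
  have hpow : 2^(k-1) ≤ 2^k := Nat.pow_le_pow_right (by norm_num) (Nat.sub_le k 1)
  induction hz using Subgroup.closure_induction with
  | mem g hg =>
    rcases hg with ⟨l, hl, rfl⟩ | ⟨m, n, hm, hn, rfl⟩
    · rw [keyB x y hca k l hl]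
      exact mul_mem
        ((le_sup_right : Qsub x y k ≤ Lsub x y k ⊔ Qsub x y k)
          (Subgroup.subset_closure ⟨l + (2^k - 1), by omega, rfl⟩))
        ((le_sup_left : Lsub x y k ≤ Lsub x y k ⊔ Qsub x y k)
          (Subgroup.subset_normalClosure (Or.inl ⟨l, l, hl, hl, rfl⟩)))
    · rcases Nat.lt_or_ge m 2 with hm2 | hm2
      · have hm1 : m = 1 := by omega
        subst hm1
        rcases Nat.lt_or_ge n 2 with hn2 | hn2
        · have hn1 : n = 1 := by omega
          subst hn1
          have e : zz x y 1 1 = 1 := pc_self _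
          rw [e, itc_one]
          exact one_mem _
        · have e : zz x y 1 n = (zz x y n 1)⁻¹ := (zz_inv x y n 1).symm
          rw [e, itc_inv x y hca (zz_mem_Z x y n 1 (by omega) (by omega))]
          apply inv_mem
          obtain ⟨i, rfl⟩ : ∃ i, n = i + 1 := ⟨n - 1, by omega⟩
          exact (le_sup_left : Lsub x y k ≤ Lsub x y k ⊔ Qsub x y k)
            (zcase x y hca k i 1 hk (by omega) (by omega))
      · obtain ⟨i, rfl⟩ : ∃ i, m = i + 1 := ⟨m - 1, by omega⟩
        exact (le_sup_left : Lsub x y k ≤ Lsub x y k ⊔ Qsub x y k)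
          (zcase x y hca k i n hk (by omega) hn)
  | one =>
    rw [itc_one]
    exact one_mem _
  | mul g h hg hh ihg ihh =>
    rw [itc_mul x y hca hg hh]
    exact mul_mem ihg ihh
  | inv g hg ihg =>
    rw [itc_inv x y hca hg]
    exact inv_mem ihg


end Paper
end

section
/- For every k ≥ 1: (1) d_k(h) ∈ Z for every h ∈ H; (2) d_k(z) = 1 for every z ∈ Z; and (3) d_k(hz) = d_k(h) for all h ∈ H and z ∈ Z. (The basic properties of the elements d_k established in the proofs of Lemma 3.3 and Proposition 3.4 of the paper.) -/
namespace Paper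

variable {G : Type*} [Group G]

-- auxiliary lemmas

lemma itc_add (x a : G) (r s : ℕ) : itc x (itc x a r) s = itc x a (r + s) := by
  induction s with
  | zero => rfl
  | succ s ih =>
    show pc (itc x (itc x a r) s) x = _
    rw [ih]; rfl

lemma idx_eq (m : ℕ) (hm : 1 ≤ m) : m - 1 + m = m + m - 1 := by omega

lemma cc_mem (x y : G) (i : ℕ) : cc x y i ∈ Hsub x y := by
  cases i with
  | zero => exact Subgroup.subset_closure ⟨1, le_refl 1, rfl⟩
  | succ n => exact Subgroup.subset_closure ⟨n + 1, Nat.succ_le_succ (Nat.zero_le n), rfl⟩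

lemma comm_mem (x y : G) (hca : ∀ z ∈ Zsub x y, ∀ h ∈ Hsub x y, z * h = h * z) :
    ∀ a ∈ Hsub x y, ∀ b ∈ Hsub x y, pc a b ∈ Zsub x y := by
  have inner : ∀ a : G, (∀ j, 1 ≤ j → pc a (cc x y j) ∈ Zsub x y) →
      ∀ b ∈ Hsub x y, pc a b ∈ Zsub x y := by
    intro a hbase b hb
    induction hb using Subgroup.closure_induction with
    | mem g hg => obtain ⟨j, hj, rfl⟩ := hg; exact hbase j hj
    | one =>
      have e : pc a 1 = 1 := by simp [pc]
      rw [e]; exact one_mem _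
    | mul g₁ g₂ hg₁ hg₂ ih₁ ih₂ =>
      have e : pc a (g₁ * g₂) = pc a g₂ * (g₂⁻¹ * (pc a g₁ * g₂)) := by
        simp only [pc]; group
      rw [e, hca _ ih₁ _ hg₂, inv_mul_cancel_left]
      exact mul_mem ih₂ ih₁
    | inv g hg ihg =>
      have e : pc a g⁻¹ = g * ((pc a g)⁻¹ * g⁻¹) := by
        simp only [pc]; group
      rw [e, hca _ (inv_mem ihg) _ (inv_mem hg), mul_inv_cancel_left]
      exact inv_mem ihg
  intro a ha
  induction ha using Subgroup.closure_induction with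
  | mem g hg =>
    obtain ⟨i, hi, rfl⟩ := hg
    refine inner _ ?_
    intro j hj
    exact Subgroup.subset_closure (Set.mem_union_right _ ⟨i, j, hi, hj, rfl⟩)
  | one =>
    intro b hb
    have e : pc 1 b = 1 := by simp [pc]
    rw [e]; exact one_mem _
  | mul g₁ g₂ hg₁ hg₂ ih₁ ih₂ =>
    intro b hb
    have e : pc (g₁ * g₂) b = (g₂⁻¹ * (pc g₁ b * g₂)) * pc g₂ b := by
      simp only [pc]; group
    rw [e, hca _ (ih₁ b hb) _ hg₂, inv_mul_cancel_left]
    exact mul_mem (ih₁ b hb) (ih₂ b hb)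
  | inv g hg ihg =>
    intro b hb
    have e : pc g⁻¹ b = g * ((pc g b)⁻¹ * g⁻¹) := by
      simp only [pc]; group
    rw [e, hca _ (inv_mem (ihg b hb)) _ (inv_mem hg), mul_inv_cancel_left]
    exact inv_mem (ihg b hb)

lemma sq_mem (x y : G) (hca : ∀ z ∈ Zsub x y, ∀ h ∈ Hsub x y, z * h = h * z) :
    ∀ h ∈ Hsub x y, h * h ∈ Zsub x y := by
  intro h hh
  induction hh using Subgroup.closure_induction with
  | mem g hg =>
    obtain ⟨i, hi, rfl⟩ := hg
    rw [← pow_two]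
    exact Subgroup.subset_closure (Set.mem_union_left _ ⟨i, hi, rfl⟩)
  | one => rw [one_mul]; exact one_mem _
  | mul g₁ g₂ hg₁ hg₂ ih₁ ih₂ =>
    have hc : pc g₂ g₁ ∈ Zsub x y := comm_mem x y hca g₂ hg₂ g₁ hg₁
    have e : (g₁ * g₂) * (g₁ * g₂) = (g₁ * g₁) * (g₂ * (pc g₂ g₁ * g₂)) := by
      simp only [pc]; group
    rw [e, hca _ hc _ hg₂]
    have e2 : (g₁ * g₁) * (g₂ * (g₂ * pc g₂ g₁)) = (g₁ * g₁) * ((g₂ * g₂) * pc g₂ g₁) := by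
      group
    rw [e2]
    exact mul_mem ih₁ (mul_mem ih₂ hc)
  | inv g hg ihg =>
    have e : g⁻¹ * g⁻¹ = (g * g)⁻¹ := by group
    rw [e]; exact inv_mem ihg

lemma Hconj (x y : G) : ∀ h ∈ Hsub x y, x⁻¹ * h * x ∈ Hsub x y := by
  intro h hh
  induction hh using Subgroup.closure_induction with
  | mem g hg =>
    obtain ⟨i, hi, rfl⟩ := hg
    have e : x⁻¹ * cc x y i * x = cc x y i * pc (cc x y i) x := by
      simp only [pc]; group
    have e2 : pc (cc x y i) x = cc x y (i + 1) := by
      show pc (itc x y (i - 1)) x = itc x y (i + 1 - 1)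
      have : i + 1 - 1 = (i - 1) + 1 := by omega
      rw [this]; rfl
    rw [e, e2]
    exact mul_mem (cc_mem x y i) (cc_mem x y (i + 1))
  | one => rw [mul_one, inv_mul_cancel]; exact one_mem _
  | mul g₁ g₂ hg₁ hg₂ ih₁ ih₂ =>
    rw [show x⁻¹ * (g₁ * g₂) * x = (x⁻¹ * g₁ * x) * (x⁻¹ * g₂ * x) from by group]
    exact mul_mem ih₁ ih₂
  | inv g hg ihg =>
    rw [show x⁻¹ * g⁻¹ * x = (x⁻¹ * g * x)⁻¹ from by group]
    exact inv_mem ihg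

lemma pcx_mem (x y : G) {h : G} (hh : h ∈ Hsub x y) : pc h x ∈ Hsub x y := by
  have e : pc h x = h⁻¹ * (x⁻¹ * h * x) := by simp only [pc]; group
  rw [e]
  exact mul_mem (inv_mem hh) (Hconj x y h hh)

lemma itc_mem (x y : G) {h : G} (hh : h ∈ Hsub x y) : ∀ r, itc x h r ∈ Hsub x y := by
  intro r
  induction r with
  | zero => exact hh
  | succ r ih => exact pcx_mem x y ih

lemma Zconj (x y : G) (hca : ∀ z ∈ Zsub x y, ∀ h ∈ Hsub x y, z * h = h * z) :
    ∀ z ∈ Zsub x y, x⁻¹ * z * x ∈ Zsub x y := by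
  intro z hz
  induction hz using Subgroup.closure_induction with
  | mem g hg =>
    rcases hg with ⟨l, hl, rfl⟩ | ⟨m, n, hm, hn, rfl⟩
    · have e : x⁻¹ * cc x y l ^ 2 * x = (x⁻¹ * cc x y l * x) * (x⁻¹ * cc x y l * x) := by
        rw [pow_two]; group
      rw [e]
      exact sq_mem x y hca _ (Hconj x y _ (cc_mem x y l))
    · have e : x⁻¹ * zz x y m n * x = pc (x⁻¹ * cc x y m * x) (x⁻¹ * cc x y n * x) := by
        simp only [zz, pc]; group
      rw [e]
      exact comm_mem x y hca _ (Hconj x y _ (cc_mem x y m)) _ (Hconj x y _ (cc_mem x y n))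
  | one => rw [mul_one, inv_mul_cancel]; exact one_mem _
  | mul g₁ g₂ hg₁ hg₂ ih₁ ih₂ =>
    rw [show x⁻¹ * (g₁ * g₂) * x = (x⁻¹ * g₁ * x) * (x⁻¹ * g₂ * x) from by group]
    exact mul_mem ih₁ ih₂
  | inv g hg ihg =>
    rw [show x⁻¹ * g⁻¹ * x = (x⁻¹ * g * x)⁻¹ from by group]
    exact inv_mem ihg

lemma zconj_pow (x y : G) (hca : ∀ z ∈ Zsub x y, ∀ h ∈ Hsub x y, z * h = h * z)
    {z : G} (hz : z ∈ Zsub x y) : ∀ n : ℕ, (x ^ n)⁻¹ * z * x ^ n ∈ Zsub x y := by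
  intro n
  induction n with
  | zero => simpa using hz
  | succ n ih =>
    rw [pow_succ, show (x ^ n * x)⁻¹ * z * (x ^ n * x)
      = x⁻¹ * ((x ^ n)⁻¹ * z * x ^ n) * x from by group]
    exact Zconj x y hca _ ih

lemma pcxZ_mem (x y : G) (hca : ∀ z ∈ Zsub x y, ∀ h ∈ Hsub x y, z * h = h * z)
    {z : G} (hz : z ∈ Zsub x y) : pc z x ∈ Zsub x y := by
  have e : pc z x = z⁻¹ * (x⁻¹ * z * x) := by simp only [pc]; group
  rw [e]
  exact mul_mem (inv_mem hz) (Zconj x y hca z hz)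

lemma itcZ_mem (x y : G) (hca : ∀ z ∈ Zsub x y, ∀ h ∈ Hsub x y, z * h = h * z)
    {z : G} (hz : z ∈ Zsub x y) : ∀ r, itc x z r ∈ Zsub x y := by
  intro r
  induction r with
  | zero => exact hz
  | succ r ih => exact pcxZ_mem x y hca ih

lemma conj_split (g u v : G) : g⁻¹ * (u * v) * g = (g⁻¹ * u * g) * (g⁻¹ * v * g) := by
  group

-- rearrangement lemmas (pure group identities with commuting hypotheses)
lemma rearr1 (d : G) {a b z₁ d' : G}
    (h1 : (z₁ * d') * a = a * (z₁ * d'))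
    (h3 : pc a b * a = a * pc a b) :
    b⁻¹ * ((a * b * z₁) * d') * (a * d) = (a * a) * pc a b * (z₁ * (d' * d)) := by
  have h2 : b⁻¹ * a * b = a * pc a b := by simp only [pc]; group
  calc b⁻¹ * ((a * b * z₁) * d') * (a * d)
      = (b⁻¹ * a * b) * ((z₁ * d') * a) * d := by group
    _ = (b⁻¹ * a * b) * (a * (z₁ * d')) * d := by rw [h1]
    _ = (a * pc a b) * (a * (z₁ * d')) * d := by rw [h2]
    _ = a * (pc a b * a) * (z₁ * (d' * d)) := by group
    _ = a * (a * pc a b) * (z₁ * (d' * d)) := by rw [h3]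
    _ = (a * a) * pc a b * (z₁ * (d' * d)) := by group

lemma rearr3 (d : G) {a b α β z₁ d' : G}
    (h1 : β * (b⁻¹ * a * b * z₁ * α) = (b⁻¹ * a * b * z₁ * α) * β)
    (h2 : α * (d' * a) = (d' * a) * α)
    (h4 : α * α = 1) :
    (b * β)⁻¹ * (((a * b * z₁) * (α * β)) * d') * ((a * α) * d)
      = b⁻¹ * ((a * b * z₁) * d') * (a * d) := by
  calc (b * β)⁻¹ * (((a * b * z₁) * (α * β)) * d') * ((a * α) * d)
      = β⁻¹ * ((b⁻¹ * a * b * z₁ * α) * β) * (d' * (a * (α * d))) := by group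
    _ = β⁻¹ * (β * (b⁻¹ * a * b * z₁ * α)) * (d' * (a * (α * d))) := by rw [← h1]
    _ = b⁻¹ * a * b * (z₁ * (α * (d' * a)) * (α * d)) := by group
    _ = b⁻¹ * a * b * (z₁ * ((d' * a) * α) * (α * d)) := by rw [h2]
    _ = b⁻¹ * a * b * (z₁ * (d' * a) * ((α * α) * d)) := by group
    _ = b⁻¹ * a * b * (z₁ * (d' * a) * (1 * d)) := by rw [h4]
    _ = b⁻¹ * ((a * b * z₁) * d') * (a * d) := by group

lemma rearr4 {h u v z₁ z₂ z₃ : G}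
    (h1 : z₁ * u = u * z₁) (h2 : (u * u) * v = v * (u * u)) (h3 : z₁ * v = v * z₁) :
    (h * u * z₁) * (u * v * z₂) * z₃ = h * v * ((u * u) * (z₁ * (z₂ * z₃))) := by
  calc (h * u * z₁) * (u * v * z₂) * z₃
      = h * u * (z₁ * u) * (v * (z₂ * z₃)) := by group
    _ = h * u * (u * z₁) * (v * (z₂ * z₃)) := by rw [h1]
    _ = h * (u * u) * (z₁ * v) * (z₂ * z₃) := by group
    _ = h * (u * u) * (v * z₁) * (z₂ * z₃) := by rw [h3]
    _ = h * ((u * u) * v) * (z₁ * (z₂ * z₃)) := by group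
    _ = h * (v * (u * u)) * (z₁ * (z₂ * z₃)) := by rw [h2]
    _ = h * v * ((u * u) * (z₁ * (z₂ * z₃))) := by group

-- exact conjugation formula on Z
lemma Qz (x y : G) (hca : ∀ z ∈ Zsub x y, ∀ h ∈ Hsub x y, z * h = h * z)
    (hz2 : ∀ z ∈ Zsub x y, z ^ 2 = 1) :
    ∀ k : ℕ, ∀ z ∈ Zsub x y, (x ^ 2 ^ k)⁻¹ * z * x ^ 2 ^ k = z * itc x z (2 ^ k) := by
  intro k
  induction k with
  | zero =>
    intro z hz
    have h0 : (2 : ℕ) ^ 0 = 1 := rfl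
    rw [h0, pow_one]
    show x⁻¹ * z * x = z * pc z x
    simp only [pc]; group
  | succ k ih =>
    intro z hz
    have hp : (2 : ℕ) ^ (k + 1) = 2 ^ k + 2 ^ k := by rw [pow_succ]; ring
    have hu : itc x z (2 ^ k) ∈ Zsub x y := itcZ_mem x y hca hz _
    have huu : itc x z (2 ^ k) * itc x z (2 ^ k) = 1 := by
      have := hz2 _ hu; rwa [pow_two] at this
    rw [hp, pow_add]
    calc (x ^ 2 ^ k * x ^ 2 ^ k)⁻¹ * z * (x ^ 2 ^ k * x ^ 2 ^ k)
        = (x ^ 2 ^ k)⁻¹ * ((x ^ 2 ^ k)⁻¹ * z * x ^ 2 ^ k) * x ^ 2 ^ k := by group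
      _ = (x ^ 2 ^ k)⁻¹ * (z * itc x z (2 ^ k)) * x ^ 2 ^ k := by rw [ih z hz]
      _ = ((x ^ 2 ^ k)⁻¹ * z * x ^ 2 ^ k) * ((x ^ 2 ^ k)⁻¹ * itc x z (2 ^ k) * x ^ 2 ^ k) := by
          group
      _ = (z * itc x z (2 ^ k)) * (itc x z (2 ^ k) * itc x (itc x z (2 ^ k)) (2 ^ k)) := by
          rw [ih z hz, ih _ hu]
      _ = (z * itc x z (2 ^ k)) * (itc x z (2 ^ k) * itc x z (2 ^ k + 2 ^ k)) := by
          rw [itc_add]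
      _ = z * ((itc x z (2 ^ k) * itc x z (2 ^ k)) * itc x z (2 ^ k + 2 ^ k)) := by group
      _ = z * itc x z (2 ^ k + 2 ^ k) := by rw [huu, one_mul]

-- conjugation formula on H, up to an element of Z
lemma QH (x y : G) (hca : ∀ z ∈ Zsub x y, ∀ h ∈ Hsub x y, z * h = h * z) :
    ∀ k : ℕ, ∀ h ∈ Hsub x y, ∃ z ∈ Zsub x y,
      (x ^ 2 ^ k)⁻¹ * h * x ^ 2 ^ k = h * itc x h (2 ^ k) * z := by
  intro k
  induction k with
  | zero =>
    intro h hh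
    refine ⟨1, one_mem _, ?_⟩
    have h0 : (2 : ℕ) ^ 0 = 1 := rfl
    rw [h0, pow_one, mul_one]
    show x⁻¹ * h * x = h * pc h x
    simp only [pc]; group
  | succ k ih =>
    intro h hh
    obtain ⟨z₁, hz₁, e₁⟩ := ih h hh
    have huH : itc x h (2 ^ k) ∈ Hsub x y := itc_mem x y hh _
    have hvH : itc x h (2 ^ k + 2 ^ k) ∈ Hsub x y := itc_mem x y hh _
    obtain ⟨z₂, hz₂, e₂⟩ := ih (itc x h (2 ^ k)) huH
    have hz₃ : (x ^ 2 ^ k)⁻¹ * z₁ * x ^ 2 ^ k ∈ Zsub x y := zconj_pow x y hca hz₁ _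
    have hp : (2 : ℕ) ^ (k + 1) = 2 ^ k + 2 ^ k := by rw [pow_succ]; ring
    refine ⟨itc x h (2 ^ k) * itc x h (2 ^ k) *
      (z₁ * (z₂ * ((x ^ 2 ^ k)⁻¹ * z₁ * x ^ 2 ^ k))), ?_, ?_⟩
    · exact mul_mem (sq_mem x y hca _ huH) (mul_mem hz₁ (mul_mem hz₂ hz₃))
    rw [hp, pow_add]
    have hv : itc x (itc x h (2 ^ k)) (2 ^ k) = itc x h (2 ^ k + 2 ^ k) := itc_add x h _ _
    calc (x ^ 2 ^ k * x ^ 2 ^ k)⁻¹ * h * (x ^ 2 ^ k * x ^ 2 ^ k)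
        = (x ^ 2 ^ k)⁻¹ * ((x ^ 2 ^ k)⁻¹ * h * x ^ 2 ^ k) * x ^ 2 ^ k := by group
      _ = (x ^ 2 ^ k)⁻¹ * (h * itc x h (2 ^ k) * z₁) * x ^ 2 ^ k := by rw [e₁]
      _ = ((x ^ 2 ^ k)⁻¹ * h * x ^ 2 ^ k) * ((x ^ 2 ^ k)⁻¹ * itc x h (2 ^ k) * x ^ 2 ^ k) *
          ((x ^ 2 ^ k)⁻¹ * z₁ * x ^ 2 ^ k) := by group
      _ = (h * itc x h (2 ^ k) * z₁) *
          (itc x h (2 ^ k) * itc x (itc x h (2 ^ k)) (2 ^ k) * z₂) *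
          ((x ^ 2 ^ k)⁻¹ * z₁ * x ^ 2 ^ k) := by rw [e₁, e₂]
      _ = (h * itc x h (2 ^ k) * z₁) *
          (itc x h (2 ^ k) * itc x h (2 ^ k + 2 ^ k) * z₂) *
          ((x ^ 2 ^ k)⁻¹ * z₁ * x ^ 2 ^ k) := by rw [hv]
      _ = h * itc x h (2 ^ k + 2 ^ k) * (itc x h (2 ^ k) * itc x h (2 ^ k) *
          (z₁ * (z₂ * ((x ^ 2 ^ k)⁻¹ * z₁ * x ^ 2 ^ k)))) :=
          rearr4 (hca _ hz₁ _ huH)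
            (hca _ (sq_mem x y hca _ huH) _ hvH)
            (hca _ hz₁ _ hvH)

lemma dd_zero (x y h : G) : dd x y 0 h = 1 := by
  simp only [dd, pow_zero, pow_one]
  show h⁻¹ * x⁻¹ * (x * h) = 1
  group

lemma dd_expand (x y : G) (k : ℕ) (h : G) :
    dd x y (k + 1) h = (itc x h (2 ^ k + 2 ^ k - 1))⁻¹ *
      ((x ^ 2 ^ k)⁻¹ * (itc x h (2 ^ k - 1) * dd x y k h) * x ^ 2 ^ k) *
      (itc x h (2 ^ k - 1) * dd x y k h) := by
  have hp : (2 : ℕ) ^ (k + 1) = 2 ^ k + 2 ^ k := by rw [pow_succ]; ring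
  simp only [dd, hp, pow_add]
  generalize (x * h) ^ (2 : ℕ) ^ k = P
  generalize x ^ (2 : ℕ) ^ k = X
  group

lemma itc_hz (x y : G) (hca : ∀ z ∈ Zsub x y, ∀ h ∈ Hsub x y, z * h = h * z)
    {h z : G} (hh : h ∈ Hsub x y) (hz : z ∈ Zsub x y) :
    ∀ r, itc x (h * z) r = itc x h r * itc x z r := by
  intro r
  induction r with
  | zero => rfl
  | succ r ih =>
    show pc (itc x (h * z) r) x = pc (itc x h r) x * pc (itc x z r) x
    rw [ih]
    have hw : itc x z r ∈ Zsub x y := itcZ_mem x y hca hz r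
    have hpu : pc (itc x h r) x ∈ Hsub x y := pcx_mem x y (itc_mem x y hh r)
    calc pc (itc x h r * itc x z r) x
        = (itc x z r)⁻¹ * (pc (itc x h r) x * itc x z r) * pc (itc x z r) x := by
          simp only [pc]; group
      _ = (itc x z r)⁻¹ * (itc x z r * pc (itc x h r) x) * pc (itc x z r) x := by
          rw [← hca _ hw _ hpu]
      _ = pc (itc x h r) x * pc (itc x z r) x := by group

lemma dd_mem (x y : G) (hca : ∀ z ∈ Zsub x y, ∀ h ∈ Hsub x y, z * h = h * z) :
    ∀ k : ℕ, ∀ h ∈ Hsub x y, dd x y k h ∈ Zsub x y := by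
  intro k
  induction k with
  | zero => intro h hh; rw [dd_zero]; exact one_mem _
  | succ k ih =>
    intro h hh
    have haH : itc x h (2 ^ k - 1) ∈ Hsub x y := itc_mem x y hh _
    have hbH : itc x h (2 ^ k + 2 ^ k - 1) ∈ Hsub x y := itc_mem x y hh _
    have hdZ : dd x y k h ∈ Zsub x y := ih h hh
    have hd'Z : (x ^ 2 ^ k)⁻¹ * dd x y k h * x ^ 2 ^ k ∈ Zsub x y :=
      zconj_pow x y hca hdZ _
    obtain ⟨z₁, hz₁, e₁⟩ := QH x y hca k (itc x h (2 ^ k - 1)) haH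
    have hab : itc x (itc x h (2 ^ k - 1)) (2 ^ k) = itc x h (2 ^ k + 2 ^ k - 1) := by
      rw [itc_add, idx_eq _ Nat.one_le_two_pow]
    rw [hab] at e₁
    have kab : pc (itc x h (2 ^ k - 1)) (itc x h (2 ^ k + 2 ^ k - 1)) ∈ Zsub x y :=
      comm_mem x y hca _ haH _ hbH
    rw [dd_expand x y k h, conj_split (x ^ 2 ^ k) (itc x h (2 ^ k - 1)) (dd x y k h), e₁]
    rw [rearr1 (dd x y k h) (hca _ (mul_mem hz₁ hd'Z) _ haH) (hca _ kab _ haH)]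
    exact mul_mem (mul_mem (sq_mem x y hca _ haH) kab) (mul_mem hz₁ (mul_mem hd'Z hdZ))

lemma dd_z (x y : G) (hca : ∀ z ∈ Zsub x y, ∀ h ∈ Hsub x y, z * h = h * z)
    (hz2 : ∀ z ∈ Zsub x y, z ^ 2 = 1) :
    ∀ k : ℕ, ∀ z ∈ Zsub x y, dd x y k z = 1 := by
  intro k
  induction k with
  | zero => intro z hz; exact dd_zero x y z
  | succ k ih =>
    intro z hz
    have haZ : itc x z (2 ^ k - 1) ∈ Zsub x y := itcZ_mem x y hca hz _
    have hbZ : itc x z (2 ^ k + 2 ^ k - 1) ∈ Zsub x y := itcZ_mem x y hca hz _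
    have e₁ : (x ^ 2 ^ k)⁻¹ * itc x z (2 ^ k - 1) * x ^ 2 ^ k
        = itc x z (2 ^ k - 1) * itc x z (2 ^ k + 2 ^ k - 1) := by
      rw [Qz x y hca hz2 k _ haZ, itc_add, idx_eq _ Nat.one_le_two_pow]
    rw [dd_expand x y k z, ih z hz, mul_one, e₁, hca _ haZ _ (Z_le_H x y hbZ)]
    rw [show (itc x z (2 ^ k + 2 ^ k - 1))⁻¹ *
        (itc x z (2 ^ k + 2 ^ k - 1) * itc x z (2 ^ k - 1)) * itc x z (2 ^ k - 1)
        = itc x z (2 ^ k - 1) * itc x z (2 ^ k - 1) from by group, ← pow_two]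
    exact hz2 _ haZ

lemma dd_hz (x y : G) (hca : ∀ z ∈ Zsub x y, ∀ h ∈ Hsub x y, z * h = h * z)
    (hz2 : ∀ z ∈ Zsub x y, z ^ 2 = 1) :
    ∀ k : ℕ, ∀ h ∈ Hsub x y, ∀ z ∈ Zsub x y, dd x y k (h * z) = dd x y k h := by
  intro k
  induction k with
  | zero => intro h hh z hz; rw [dd_zero, dd_zero]
  | succ k ih =>
    intro h hh z hz
    have haH : itc x h (2 ^ k - 1) ∈ Hsub x y := itc_mem x y hh _
    have hbH : itc x h (2 ^ k + 2 ^ k - 1) ∈ Hsub x y := itc_mem x y hh _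
    have hαZ : itc x z (2 ^ k - 1) ∈ Zsub x y := itcZ_mem x y hca hz _
    have hβZ : itc x z (2 ^ k + 2 ^ k - 1) ∈ Zsub x y := itcZ_mem x y hca hz _
    obtain ⟨z₁, hz₁, e₁⟩ := QH x y hca k (itc x h (2 ^ k - 1)) haH
    have hab : itc x (itc x h (2 ^ k - 1)) (2 ^ k) = itc x h (2 ^ k + 2 ^ k - 1) := by
      rw [itc_add, idx_eq _ Nat.one_le_two_pow]
    rw [hab] at e₁
    have eα : (x ^ 2 ^ k)⁻¹ * itc x z (2 ^ k - 1) * x ^ 2 ^ k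
        = itc x z (2 ^ k - 1) * itc x z (2 ^ k + 2 ^ k - 1) := by
      rw [Qz x y hca hz2 k _ hαZ, itc_add, idx_eq _ Nat.one_le_two_pow]
    have hd'H : (x ^ 2 ^ k)⁻¹ * dd x y k h * x ^ 2 ^ k ∈ Hsub x y :=
      Z_le_H x y (zconj_pow x y hca (dd_mem x y hca k h hh) _)
    have hWH : (itc x h (2 ^ k + 2 ^ k - 1))⁻¹ * itc x h (2 ^ k - 1) *
        itc x h (2 ^ k + 2 ^ k - 1) * z₁ * itc x z (2 ^ k - 1) ∈ Hsub x y :=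
      mul_mem (mul_mem (mul_mem (mul_mem (inv_mem hbH) haH) hbH)
        (Z_le_H x y hz₁)) (Z_le_H x y hαZ)
    rw [dd_expand x y k (h * z), dd_expand x y k h,
      itc_hz x y hca hh hz (2 ^ k + 2 ^ k - 1), itc_hz x y hca hh hz (2 ^ k - 1),
      ih h hh z hz,
      conj_split (x ^ 2 ^ k) (itc x h (2 ^ k - 1) * itc x z (2 ^ k - 1)) (dd x y k h),
      conj_split (x ^ 2 ^ k) (itc x h (2 ^ k - 1)) (itc x z (2 ^ k - 1)),
      conj_split (x ^ 2 ^ k) (itc x h (2 ^ k - 1)) (dd x y k h),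
      e₁, eα]
    exact rearr3 (dd x y k h) (hca _ hβZ _ hWH) (hca _ hαZ _ (mul_mem hd'H haH))
      (by rw [← pow_two]; exact hz2 _ hαZ)

theorem dd_basic_properties (x y : G)
    (hca : ∀ z ∈ Zsub x y, ∀ h ∈ Hsub x y, z * h = h * z)
    (hz2 : ∀ z ∈ Zsub x y, z ^ 2 = 1)
    (k : ℕ) (hk : 1 ≤ k) :
    (∀ h ∈ Hsub x y, dd x y k h ∈ Zsub x y) ∧
      (∀ z ∈ Zsub x y, dd x y k z = 1) ∧
      (∀ h ∈ Hsub x y, ∀ z ∈ Zsub x y, dd x y k (h * z) = dd x y k h) := by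
    refine ⟨fun h hh => dd_mem x y hca k h hh,
      fun z hz => dd_z x y hca hz2 k z hz,
      fun h hh z hz => dd_hz x y hca hz2 k h hh z hz⟩

end Paper
end
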